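/- (Weak commutativity) Let V be an (r+1)-toroidal vertex algebra, σ an automorphism of V with σ^N = 1, and (W, Y_W) a σ-twisted V-module. Then for any u, v ∈ V there exists a nonnegative integer k such that (x_0−y_0)^k [Y_W(u;x_0,x), Y_W(v;y_0,y)] = 0. -/

import Mathlib

open scoped BigOperators

attribute [local instance] Classical.propDecidable

noncomputable section

/-- Generalized binomial coefficient `C(q, i)` for a rational `q`:
`q(q-1)⋯(q-i+1)/i!`. -/
def qchoose (q : ℚ) (i : ℕ) : ℚ := (descPochhammer ℚ i).eval q / (Nat.factorial i : ℚ)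

/-- `C(q, i)` as a complex scalar. -/
def binomC (q : ℚ) (i : ℕ) : ℂ := (qchoose q i : ℂ)

/-- `ω_N = exp(2π√-1/N)`, the principal primitive `N`-th root of unity. -/
def rtu (N : ℕ) : ℂ := Complex.exp (2 * Real.pi * Complex.I / (N : ℂ))

/-- An `(r+1)`-toroidal vertex algebra, encoded through the mode operators
`v_{m₀,m}` of the vertex operator map
`Y(v;x₀,x) = ∑ v_{m₀,m} x₀^{-m₀-1} x^{-m}`.  The axioms are the
coefficient-wise versions of the vacuum, creation and Jacobi identity
axioms. -/
structure ToroidalVA (r : ℕ) (V : Type) [AddCommGroup V] [Module ℂ V] where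
  /-- the mode maps `v ↦ v_{m₀,m}` -/
  Y : V →ₗ[ℂ] (ℤ → (Fin r → ℤ) → Module.End ℂ V)
  /-- the vacuum vector `𝟏` -/
  vac : V
  /-- lower truncation: `Y` maps into `E(V,r) = Hom(V, V[[x₁^{±1},…]]((x₀)))` -/
  trunc : ∀ u v : V, ∃ M : ℤ, ∀ m0 : ℤ, M ≤ m0 → ∀ m : Fin r → ℤ, Y u m0 m v = 0
  /-- `Y(𝟏;x₀,x)v = v` -/
  vac_act : ∀ (v : V) (m0 : ℤ) (m : Fin r → ℤ),
    Y vac m0 m v = if m0 = -1 ∧ m = 0 then v else 0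
  /-- `Y(v;x₀,x)𝟏 ∈ V[[x₀,x₁^{±1},…,x_r^{±1}]]` -/
  creation : ∀ (v : V) (m0 : ℤ) (m : Fin r → ℤ), 0 ≤ m0 → Y v m0 m vac = 0
  /-- the Jacobi identity, written out in components -/
  jacobi : ∀ (u v w : V) (m0 n0 k0 : ℤ) (p q : Fin r → ℤ),
    (∑ᶠ i : ℕ, ((-1 : ℂ) ^ i * binomC (k0 : ℚ) i) •
      (Y u (m0 + k0 - i) p (Y v (n0 + i) (q - p) w)
        - ((-1 : ℂ) ^ (k0 : ℤ)) • Y v (n0 + k0 - i) (q - p) (Y u (m0 + i) p w)))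
    = ∑ᶠ i : ℕ, binomC (m0 : ℚ) i • Y (Y u (k0 + i) p v) (m0 + n0 - i) q w

/-- An automorphism of an `(r+1)`-toroidal vertex algebra: a bijective linear
map fixing the vacuum and intertwining all mode operators. -/
def ToroidalVA.IsAut {r : ℕ} {V : Type} [AddCommGroup V] [Module ℂ V]
    (T : ToroidalVA r V) (σ : Module.End ℂ V) : Prop :=
  Function.Bijective σ ∧ σ T.vac = T.vac ∧
    ∀ (u v : V) (m0 : ℤ) (m : Fin r → ℤ), σ (T.Y u m0 m v) = T.Y (σ u) m0 m (σ v)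

/-- A `σ`-twisted module for an `(r+1)`-toroidal vertex algebra `V` (with `σ`
an automorphism of period `N`), encoded through the mode operators
`v_{m₀,m}` (`m₀ ∈ (1/N)ℤ`) of `Y_W(v;x₀,x) = ∑ v_{m₀,m} x₀^{-m₀-1} x^{-m}`.
The twisted Jacobi identity is recorded in its coefficient-wise form, for
`σ`-eigenvectors `u ∈ V^s` (which is equivalent to the usual formulation by
linearity, since `V = ⊕ V^s`). -/
structure TwistedModule (r N : ℕ) {V : Type} [AddCommGroup V] [Module ℂ V]
    (T : ToroidalVA r V) (σ : Module.End ℂ V)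
    (W : Type) [AddCommGroup W] [Module ℂ W] where
  /-- the twisted mode maps `v ↦ v_{m₀,m}` -/
  Yw : V →ₗ[ℂ] (ℚ → (Fin r → ℤ) → Module.End ℂ W)
  /-- modes are supported on `m₀ ∈ (1/N)ℤ` -/
  frac : ∀ (u : V) (m0 : ℚ) (m : Fin r → ℤ),
    (∀ t : ℤ, m0 ≠ (t : ℚ) / (N : ℚ)) → Yw u m0 m = 0
  /-- lower truncation: `Y_W` maps into `E(W,r;N)` -/
  trunc : ∀ (u : V) (w : W), ∃ M : ℚ, ∀ m0 : ℚ, M ≤ m0 → ∀ m : Fin r → ℤ,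
    Yw u m0 m w = 0
  /-- `Y_W(𝟏;x₀,x) = 1_W` -/
  vac_act : ∀ (m0 : ℚ) (m : Fin r → ℤ),
    Yw T.vac m0 m = if m0 = -1 ∧ m = 0 then 1 else 0
  /-- the twisted Jacobi identity in components, for `u ∈ V^s` -/
  jacobi : ∀ (u : V) (s : ℕ), s < N → σ u = (rtu N) ^ s • u →
    ∀ (v : V) (w : W) (m0 n0 : ℚ) (k0 : ℤ) (p q : Fin r → ℤ),
    (∑ᶠ i : ℕ, ((-1 : ℂ) ^ i * binomC (k0 : ℚ) i) •
      (Yw u (m0 + k0 - i) p (Yw v (n0 + i) (q - p) w)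
        - ((-1 : ℂ) ^ (k0 : ℤ)) • Yw v (n0 + k0 - i) (q - p) (Yw u (m0 + i) p w)))
    = if ∃ t : ℤ, m0 = (s : ℚ) / (N : ℚ) + (t : ℚ) then
        ∑ᶠ i : ℕ, binomC m0 i • Yw (T.Y u (k0 + i) p v) (m0 + n0 - i) q w
      else 0

end


noncomputable section

lemma binomC_nat (k i : ℕ) : binomC (k : ℚ) i = (k.choose i : ℂ) := by
  have hfac : (Nat.factorial i : ℂ) ≠ 0 := by exact_mod_cast (Nat.factorial_pos i).ne'
  unfold binomC qchoose
  rw [descPochhammer_eval_eq_descFactorial, Nat.descFactorial_eq_factorial_mul_choose]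
  push_cast
  rw [mul_comm, mul_div_assoc, div_self hfac, mul_one]

lemma finsum_choose_smul {A : Type*} [AddCommGroup A] [Module ℂ A] (k : ℕ) (g : ℕ → A) :
    (∑ᶠ i : ℕ, ((-1:ℂ)^i * (k.choose i : ℂ)) • g i)
      = ∑ i ∈ Finset.range (k+1), ((-1:ℂ)^i * (k.choose i : ℂ)) • g i := by
  apply finsum_eq_sum_of_support_subset
  intro i hi
  simp only [Function.mem_support] at hi
  simp only [Finset.coe_range, Set.mem_Iio]
  by_contra h
  push_neg at h
  exact hi (by rw [Nat.choose_eq_zero_of_lt (by omega)]; simp)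

end

noncomputable section

/-- (Weak commutativity.)  For any `u, v ∈ V` there is a
nonnegative integer `k` with `(x₀-y₀)^k [Y_W(u;x₀,x), Y_W(v;y₀,y)] = 0`,
written out in coefficients: the coefficient of
`x₀^{-m₀-1} y₀^{-n₀-1} x^{-p} y^{-q}` of
`(x₀-y₀)^k [Y_W(u;x₀,x), Y_W(v;y₀,y)]` is the finite sum below. -/
theorem twisted_weak_commutativity
    {r N : ℕ} (hr : 0 < r) (hN : 0 < N)
    {V : Type} [AddCommGroup V] [Module ℂ V]
    (T : ToroidalVA r V) (σ : Module.End ℂ V)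
    (haut : T.IsAut σ) (hper : σ ^ N = 1)
    {W : Type} [AddCommGroup W] [Module ℂ W]
    (M : TwistedModule r N T σ W)
    (u v : V) :
    ∃ k : ℕ, ∀ (m0 n0 : ℚ) (p q : Fin r → ℤ),
      ∑ i ∈ Finset.range (k + 1),
        ((-1 : ℂ) ^ i * (Nat.choose k i : ℂ)) •
          (M.Yw u (m0 + (k : ℚ) - i) p * M.Yw v (n0 + i) q
            - M.Yw v (n0 + (k : ℚ) - i) q * M.Yw u (m0 + i) p) = 0 := by
  classical
  have hNne : (N : ℂ) ≠ 0 := Nat.cast_ne_zero.mpr hN.ne'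
  have hprim : IsPrimitiveRoot (rtu N) N := Complex.isPrimitiveRoot_exp N hN.ne'
  have hzN : (rtu N) ^ N = 1 := hprim.pow_eq_one
  have hz0 : rtu N ≠ 0 := hprim.ne_zero hN.ne'
  -- eigencomponents of u
  set us : ℕ → V := fun s =>
    (N : ℂ)⁻¹ • ∑ j ∈ Finset.range N, ((rtu N ^ s)⁻¹) ^ j • ((σ ^ j) u) with husdef
  have heig : ∀ s : ℕ, σ (us s) = (rtu N) ^ s • us s := by
    intro s
    have hzs : (rtu N) ^ s ≠ 0 := pow_ne_zero _ hz0
    have hzsN : ((rtu N) ^ s) ^ N = 1 := by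
      rw [← pow_mul, mul_comm, pow_mul, hzN, one_pow]
    set f : ℕ → V := fun j => (rtu N ^ s * ((rtu N ^ s)⁻¹) ^ j) • ((σ ^ j) u) with hfdef
    have hshift : ∀ j : ℕ, f (j + 1) = ((rtu N ^ s)⁻¹) ^ j • ((σ ^ (j + 1)) u) := by
      intro j
      simp only [hfdef]
      congr 1
      rw [pow_succ]
      field_simp
    have h1 : σ (us s) = (N : ℂ)⁻¹ • ∑ j ∈ Finset.range N, f (j + 1) := by
      simp only [husdef, map_smul, map_sum]
      congr 1
      refine Finset.sum_congr rfl fun j _ => ?_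
      rw [hshift j, pow_succ']
      rfl
    have hfN0 : f N = f 0 := by
      simp [hfdef, hper, inv_pow, hzsN]
    have h2 : ∑ j ∈ Finset.range N, f (j + 1) = ∑ j ∈ Finset.range N, f j := by
      have e1 := Finset.sum_range_succ f N
      have e2 := Finset.sum_range_succ' f N
      rw [e1, hfN0] at e2
      exact (add_right_cancel e2.symm)
    rw [h1, h2]
    have h3 : ∀ j : ℕ, f j = (rtu N) ^ s • (((rtu N ^ s)⁻¹) ^ j • ((σ ^ j) u)) := by
      intro j; simp only [hfdef]; rw [mul_smul]
    simp only [h3, ← Finset.smul_sum]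
    simp only [husdef]
    rw [smul_comm]
  -- the components sum to u
  have hsum : ∑ s ∈ Finset.range N, us s = u := by
    have hcoef : ∀ j ∈ Finset.range N,
        (∑ s ∈ Finset.range N, ((rtu N ^ s)⁻¹) ^ j) = if j = 0 then (N : ℂ) else 0 := by
      intro j hj
      rcases eq_or_ne j 0 with h | h
      · simp [h]
      · rw [if_neg h]
        have hrw : ∀ s : ℕ, ((rtu N ^ s)⁻¹) ^ j = (((rtu N)⁻¹) ^ j) ^ s := by
          intro s
          rw [inv_pow, inv_pow, inv_pow, ← pow_mul, ← pow_mul, mul_comm]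
        simp only [hrw]
        have hx1 : ((rtu N)⁻¹) ^ j ≠ 1 := by
          rw [inv_pow]
          intro hc
          rw [inv_eq_one] at hc
          exact hprim.pow_ne_one_of_pos_of_lt h
            (Finset.mem_range.mp hj) hc
        have hxN : (((rtu N)⁻¹) ^ j) ^ N = 1 := by
          rw [inv_pow, inv_pow, ← pow_mul, mul_comm, pow_mul, hzN, one_pow, inv_one]
        rw [geom_sum_eq hx1, hxN]
        simp
    calc ∑ s ∈ Finset.range N, us s
        = (N : ℂ)⁻¹ • ∑ s ∈ Finset.range N, ∑ j ∈ Finset.range N,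
            ((rtu N ^ s)⁻¹) ^ j • ((σ ^ j) u) := by
          rw [Finset.smul_sum]
      _ = (N : ℂ)⁻¹ • ∑ j ∈ Finset.range N, ∑ s ∈ Finset.range N,
            ((rtu N ^ s)⁻¹) ^ j • ((σ ^ j) u) := by
          rw [Finset.sum_comm]
      _ = (N : ℂ)⁻¹ • ∑ j ∈ Finset.range N,
            (∑ s ∈ Finset.range N, ((rtu N ^ s)⁻¹) ^ j) • ((σ ^ j) u) := by
          congr 1
          exact Finset.sum_congr rfl fun j _ => (Finset.sum_smul).symm
      _ = u := by
          have hrepl : ∑ j ∈ Finset.range N,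
              (∑ s ∈ Finset.range N, ((rtu N ^ s)⁻¹) ^ j) • ((σ ^ j) u)
              = ∑ j ∈ Finset.range N, (if j = 0 then (N : ℂ) else 0) • ((σ ^ j) u) :=
            Finset.sum_congr rfl fun j hj => by rw [hcoef j hj]
          rw [hrepl]
          simp only [ite_smul, zero_smul]
          rw [Finset.sum_ite_eq' (Finset.range N) 0 fun j => (N : ℂ) • ((σ ^ j) u)]
          rw [if_pos (Finset.mem_range.mpr hN)]
          simp [smul_smul, inv_mul_cancel₀ hNne]
  -- truncation bounds and choice of k
  choose Ms hMs using fun s => T.trunc (us s) v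
  set K0 : ℕ := (Finset.range N).sup fun s => (Ms s).toNat with hK0
  set k : ℕ := 2 * K0 with hk
  have hk_ge : ∀ s ∈ Finset.range N, Ms s ≤ (k : ℤ) := by
    intro s hs
    have h1 : Ms s ≤ ((Ms s).toNat : ℤ) := Int.self_le_toNat _
    have h2 : (Ms s).toNat ≤ K0 := Finset.le_sup (f := fun s => (Ms s).toNat) hs
    have : ((Ms s).toNat : ℤ) ≤ (k : ℤ) := by exact_mod_cast le_trans h2 (by omega)
    exact le_trans h1 this
  have hsign : ((-1 : ℂ)) ^ k = 1 := by
    rw [hk, pow_mul]; norm_num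
  refine ⟨k, ?_⟩
  intro m0 n0 p q
  refine LinearMap.ext fun w => ?_
  simp only [LinearMap.coe_sum, Finset.sum_apply, LinearMap.smul_apply, LinearMap.sub_apply,
    Module.End.mul_apply, LinearMap.zero_apply]
  -- the key identity for each eigencomponent
  have hper_s : ∀ s ∈ Finset.range N,
      ∑ i ∈ Finset.range (k + 1), ((-1 : ℂ) ^ i * (k.choose i : ℂ)) •
        (M.Yw (us s) (m0 + (k : ℚ) - i) p (M.Yw v (n0 + i) q w)
          - M.Yw v (n0 + (k : ℚ) - i) q (M.Yw (us s) (m0 + i) p w)) = 0 := by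
    intro s hs
    have hj := M.jacobi (us s) s (Finset.mem_range.mp hs) (heig s) v w m0 n0 (k : ℤ) p (p + q)
    have hrhs : (if ∃ t : ℤ, m0 = (s : ℚ) / (N : ℚ) + (t : ℚ) then
        ∑ᶠ i : ℕ, binomC m0 i •
          M.Yw (T.Y (us s) ((k : ℤ) + i) p v) (m0 + n0 - i) (p + q) w
      else 0) = 0 := by
      split_ifs with hcond
      · refine finsum_eq_zero_of_forall_eq_zero fun i => ?_
        rw [hMs s ((k : ℤ) + i)
          (le_trans (hk_ge s hs) (le_add_of_nonneg_right (Int.natCast_nonneg i))) p]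
        rw [map_zero]
        simp
      · rfl
    rw [hrhs] at hj
    simp only [zpow_natCast, Int.cast_natCast, add_sub_cancel_left, hsign, one_smul,
      binomC_nat] at hj
    have hfin := finsum_choose_smul (A := W) k
      (fun i : ℕ => M.Yw (us s) (m0 + (k : ℚ) - i) p (M.Yw v (n0 + i) q w)
        - M.Yw v (n0 + (k : ℚ) - i) q (M.Yw (us s) (m0 + i) p w))
    rw [hfin] at hj
    exact hj
  -- expand u into its eigencomponents
  have hexp : ∀ (a : ℚ) (z : W), M.Yw u a p z = ∑ s ∈ Finset.range N, M.Yw (us s) a p z := by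
    intro a z
    conv_lhs => rw [← hsum]
    rw [map_sum]
    simp only [Finset.sum_apply, LinearMap.coe_sum]
  have step : ∀ i : ℕ,
      ((-1 : ℂ) ^ i * (k.choose i : ℂ)) •
        (M.Yw u (m0 + (k : ℚ) - i) p (M.Yw v (n0 + i) q w)
          - M.Yw v (n0 + (k : ℚ) - i) q (M.Yw u (m0 + i) p w))
      = ∑ s ∈ Finset.range N, ((-1 : ℂ) ^ i * (k.choose i : ℂ)) •
        (M.Yw (us s) (m0 + (k : ℚ) - i) p (M.Yw v (n0 + i) q w)
          - M.Yw v (n0 + (k : ℚ) - i) q (M.Yw (us s) (m0 + i) p w)) := by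
    intro i
    rw [hexp (m0 + (k : ℚ) - i) (M.Yw v (n0 + i) q w), hexp (m0 + i) w, map_sum,
      ← Finset.sum_sub_distrib, Finset.smul_sum]
  rw [Finset.sum_congr rfl fun i _ => step i, Finset.sum_comm]
  exact Finset.sum_eq_zero hper_s

end
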